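/- Let {U_1, …, U_k} be an independent set of stabilizers on N qubits (so necessarily k ≤ N), and let λ_1, …, λ_k ∈ {1, −1}. Then the simultaneous eigenspace {ψ : U_i ψ = λ_i ψ for all i = 1, …, k} has complex dimension 2^{N−k}. -/

import Mathlib

noncomputable section

/-- The space of operators (matrices) on the `N`-qubit Hilbert space. -/
abbrev QMat (N : ℕ) := Matrix (Fin N → Fin 2) (Fin N → Fin 2) ℂ

def pauliSx : Matrix (Fin 2) (Fin 2) ℂ := !![0, 1; 1, 0]
def pauliSy : Matrix (Fin 2) (Fin 2) ℂ := !![0, -Complex.I; Complex.I, 0]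
def pauliSz : Matrix (Fin 2) (Fin 2) ℂ := !![1, 0; 0, -1]

/-- A Pauli operator on `N` qubits: a ±1-signed tensor product of single-qubit
Pauli matrices `1, σx, σy, σz`. -/
def IsPauli {N : ℕ} (M : QMat N) : Prop :=
  ∃ (ε : ℂ) (P : Fin N → Matrix (Fin 2) (Fin 2) ℂ),
    (ε = 1 ∨ ε = -1) ∧
    (∀ j, P j = 1 ∨ P j = pauliSx ∨ P j = pauliSy ∨ P j = pauliSz) ∧
    ∀ s t, M s t = ε * ∏ j, P j (s j) (t j)

/-- A set of stabilizers: pairwise commuting Pauli operators whose generated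
multiplicative group (equivalently, monoid, since each element is an involution)
does not contain `-1`. -/
def IsStabilizerSet {N : ℕ} (S : Set (QMat N)) : Prop :=
  (∀ M ∈ S, IsPauli M) ∧
  (∀ M ∈ S, ∀ M' ∈ S, M * M' = M' * M) ∧
  (-1 : QMat N) ∉ Submonoid.closure S

/-- An independent set of stabilizers: the product of every nonempty finite subset
(encoded as a nodup list of elements of `S`) is not a complex scalar multiple of
the identity matrix. -/
def IsIndependentSet {N : ℕ} (S : Set (QMat N)) : Prop :=
  IsStabilizerSet S ∧
  ∀ L : List (QMat N), L ≠ [] → L.Nodup → (∀ A ∈ L, A ∈ S) →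
    ∀ c : ℂ, L.prod ≠ c • (1 : QMat N)

/-- single-qubit Pauli -/
def IsP1 (P : Matrix (Fin 2) (Fin 2) ℂ) : Prop :=
  P = 1 ∨ P = pauliSx ∨ P = pauliSy ∨ P = pauliSz

/-- phased Pauli string -/
def IsPP {N : ℕ} (M : QMat N) : Prop :=
  ∃ (ε : ℂ) (P : Fin N → Matrix (Fin 2) (Fin 2) ℂ),
    (ε ^ 4 = 1) ∧ (∀ j, IsP1 (P j)) ∧
    ∀ s t, M s t = ε * ∏ j, P j (s j) (t j)

lemma isP1_mul {P Q : Matrix (Fin 2) (Fin 2) ℂ} (hP : IsP1 P) (hQ : IsP1 Q) :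
    ∃ (γ : ℂ) (R : Matrix (Fin 2) (Fin 2) ℂ), γ ^ 4 = 1 ∧ IsP1 R ∧ P * Q = γ • R := by
  have hI : Complex.I ^ 4 = 1 := Complex.I_pow_four
  have hnI : (-Complex.I) ^ 4 = 1 := by
    rw [show (-Complex.I) ^ 4 = Complex.I ^ 4 by ring, hI]
  have hn1 : (-1 : ℂ) ^ 4 = 1 := by norm_num
  rcases hP with rfl | rfl | rfl | rfl <;> rcases hQ with rfl | rfl | rfl | rfl
  · exact ⟨1, 1, by norm_num, Or.inl rfl, by simp⟩
  · exact ⟨1, pauliSx, by norm_num, Or.inr (Or.inl rfl), by simp⟩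
  · exact ⟨1, pauliSy, by norm_num, Or.inr (Or.inr (Or.inl rfl)), by simp⟩
  · exact ⟨1, pauliSz, by norm_num, Or.inr (Or.inr (Or.inr rfl)), by simp⟩
  · exact ⟨1, pauliSx, by norm_num, Or.inr (Or.inl rfl), by simp⟩
  · refine ⟨1, 1, by norm_num, Or.inl rfl, ?_⟩
    simp [pauliSx]; ext i j; fin_cases i <;> fin_cases j <;>
      simp [Matrix.mul_apply, Fin.sum_univ_two, Matrix.one_apply]
  · refine ⟨Complex.I, pauliSz, hI, Or.inr (Or.inr (Or.inr rfl)), ?_⟩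
    ext i j; fin_cases i <;> fin_cases j <;>
      simp [pauliSx, pauliSy, pauliSz, Matrix.mul_apply, Fin.sum_univ_two]
  · refine ⟨-Complex.I, pauliSy, hnI, Or.inr (Or.inr (Or.inl rfl)), ?_⟩
    ext i j; fin_cases i <;> fin_cases j <;>
      simp [pauliSx, pauliSy, pauliSz, Matrix.mul_apply, Fin.sum_univ_two]
  · exact ⟨1, pauliSy, by norm_num, Or.inr (Or.inr (Or.inl rfl)), by simp⟩
  · refine ⟨-Complex.I, pauliSz, hnI, Or.inr (Or.inr (Or.inr rfl)), ?_⟩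
    ext i j; fin_cases i <;> fin_cases j <;>
      simp [pauliSx, pauliSy, pauliSz, Matrix.mul_apply, Fin.sum_univ_two]
  · refine ⟨1, 1, by norm_num, Or.inl rfl, ?_⟩
    ext i j; fin_cases i <;> fin_cases j <;>
      simp [pauliSy, Matrix.mul_apply, Fin.sum_univ_two, Matrix.one_apply, Complex.I_mul_I]
  · refine ⟨Complex.I, pauliSx, hI, Or.inr (Or.inl rfl), ?_⟩
    ext i j; fin_cases i <;> fin_cases j <;>
      simp [pauliSx, pauliSy, pauliSz, Matrix.mul_apply, Fin.sum_univ_two]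
  · exact ⟨1, pauliSz, by norm_num, Or.inr (Or.inr (Or.inr rfl)), by simp⟩
  · refine ⟨Complex.I, pauliSy, hI, Or.inr (Or.inr (Or.inl rfl)), ?_⟩
    ext i j; fin_cases i <;> fin_cases j <;>
      simp [pauliSx, pauliSy, pauliSz, Matrix.mul_apply, Fin.sum_univ_two]
  · refine ⟨-Complex.I, pauliSx, hnI, Or.inr (Or.inl rfl), ?_⟩
    ext i j; fin_cases i <;> fin_cases j <;>
      simp [pauliSx, pauliSy, pauliSz, Matrix.mul_apply, Fin.sum_univ_two]
  · refine ⟨1, 1, by norm_num, Or.inl rfl, ?_⟩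
    ext i j; fin_cases i <;> fin_cases j <;>
      simp [pauliSz, Matrix.mul_apply, Fin.sum_univ_two, Matrix.one_apply]

lemma prod_one_apply {N : ℕ} (s t : Fin N → Fin 2) :
    (∏ j, (1 : Matrix (Fin 2) (Fin 2) ℂ) (s j) (t j)) = if s = t then 1 else 0 := by
  by_cases h : s = t
  · subst h; simp [Matrix.one_apply]
  · obtain ⟨j, hj⟩ := Function.ne_iff.mp h
    rw [if_neg h]
    exact Finset.prod_eq_zero (Finset.mem_univ j) (by simp [Matrix.one_apply, hj])

lemma tensor_mul {N : ℕ} (ε ε' : ℂ) (P P' : Fin N → Matrix (Fin 2) (Fin 2) ℂ)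
    (M M' : QMat N) (hM : ∀ s t, M s t = ε * ∏ j, P j (s j) (t j))
    (hM' : ∀ s t, M' s t = ε' * ∏ j, P' j (s j) (t j)) :
    ∀ s t, (M * M') s t = (ε * ε') * ∏ j, (P j * P' j) (s j) (t j) := by
  intro s t
  rw [Matrix.mul_apply]
  simp only [hM, hM']
  have : ∀ u : Fin N → Fin 2,
      (ε * ∏ j, P j (s j) (u j)) * (ε' * ∏ j, P' j (u j) (t j)) =
      (ε * ε') * ∏ j, (P j (s j) (u j) * P' j (u j) (t j)) := by
    intro u
    rw [mul_mul_mul_comm, ← Finset.prod_mul_distrib]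
  rw [Finset.sum_congr rfl fun u _ => this u, ← Finset.mul_sum]
  congr 1
  rw [← Fintype.prod_sum (fun j x => P j (s j) x * P' j x (t j))]
  exact Finset.prod_congr rfl fun j _ => (Matrix.mul_apply).symm

lemma isPP_mul {N : ℕ} {M M' : QMat N} (h : IsPP M) (h' : IsPP M') : IsPP (M * M') := by
  obtain ⟨ε, P, hε, hP, hMe⟩ := h
  obtain ⟨ε', P', hε', hP', hMe'⟩ := h'
  choose γ Q hγ hQ hPQ using fun j => isP1_mul (hP j) (hP' j)
  refine ⟨ε * ε' * ∏ j, γ j, Q, ?_, hQ, ?_⟩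
  · rw [mul_pow, mul_pow, hε, hε', ← Finset.prod_pow]
    simp [hγ]
  · intro s t
    rw [tensor_mul ε ε' P P' M M' hMe hMe' s t]
    simp only [hPQ, Matrix.smul_apply, smul_eq_mul]
    rw [Finset.prod_mul_distrib]
    ring

lemma one_isPP {N : ℕ} : IsPP (1 : QMat N) := by
  refine ⟨1, fun _ => 1, by norm_num, fun _ => Or.inl rfl, fun s t => ?_⟩
  rw [prod_one_apply, Matrix.one_apply, one_mul]

lemma isPauli_isPP {N : ℕ} {M : QMat N} (h : IsPauli M) : IsPP M := by
  obtain ⟨ε, P, hε, hP, hMe⟩ := h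
  exact ⟨ε, P, by rcases hε with rfl | rfl <;> norm_num, hP, hMe⟩

lemma isPP_trace_eq_zero {N : ℕ} {M : QMat N} (h : IsPP M)
    (h1 : ∀ c : ℂ, M ≠ c • 1) : Matrix.trace M = 0 := by
  obtain ⟨ε, P, hε, hP, hMe⟩ := h
  by_cases hone : ∀ j, P j = 1
  · exfalso
    refine h1 ε (Matrix.ext fun s t => ?_)
    rw [hMe s t, Matrix.smul_apply, Matrix.one_apply, smul_eq_mul]
    congr 1
    rw [show (∏ j, P j (s j) (t j)) = ∏ j, (1 : Matrix (Fin 2) (Fin 2) ℂ) (s j) (t j)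
        from Finset.prod_congr rfl fun j _ => by rw [hone j]]
    rw [prod_one_apply]
  · push_neg at hone
    obtain ⟨j₀, hj₀⟩ := hone
    unfold Matrix.trace Matrix.diag
    simp only [hMe]
    rw [← Finset.mul_sum]
    have : (∑ s : Fin N → Fin 2, ∏ j, P j (s j) (s j)) = ∏ j, ∑ x, P j x x := by
      rw [Fintype.prod_sum (fun j x => P j x x)]
    rw [this]
    have hz : (∑ x, P j₀ x x) = 0 := by
      rcases hP j₀ with h' | h' | h' | h'
      · exact absurd h' hj₀
      all_goals rw [h']; simp [pauliSx, pauliSy, pauliSz, Fin.sum_univ_two]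
    rw [Finset.prod_eq_zero (Finset.mem_univ j₀) hz, mul_zero]

lemma isP1_sq {P : Matrix (Fin 2) (Fin 2) ℂ} (h : IsP1 P) : P * P = 1 := by
  rcases h with rfl | rfl | rfl | rfl
  · simp
  all_goals
    ext i j; fin_cases i <;> fin_cases j <;>
      simp [pauliSx, pauliSy, pauliSz, Matrix.mul_apply, Fin.sum_univ_two, Matrix.one_apply,
        Complex.I_mul_I]

lemma isPauli_sq {N : ℕ} {M : QMat N} (h : IsPauli M) : M * M = 1 := by
  obtain ⟨ε, P, hε, hP, hMe⟩ := h
  refine Matrix.ext fun s t => ?_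
  rw [tensor_mul ε ε P P M M hMe hMe s t]
  have hε2 : ε * ε = 1 := by rcases hε with rfl | rfl <;> norm_num
  rw [hε2, one_mul,
    show (∏ j, (P j * P j) (s j) (t j)) = ∏ j, (1 : Matrix (Fin 2) (Fin 2) ℂ) (s j) (t j)
      from Finset.prod_congr rfl fun j _ => by rw [isP1_sq (hP j)],
    prod_one_apply, Matrix.one_apply]


/-- the simultaneous eigenspace of an independent set of `k` stabilizers
`U i` with eigenvalues `λ i ∈ {1,-1}` has complex dimension `2^(N-k)`. -/
theorem statement1 (N k : ℕ) (hN : 0 < N)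
    (U : Fin k → QMat N)
    (hinj : Function.Injective U)
    (hind : IsIndependentSet (Set.range U))
    (lam : Fin k → ℂ) (hlam : ∀ i, lam i = 1 ∨ lam i = -1) :
    Module.finrank ℂ
      ↥(⨅ i : Fin k,
          LinearMap.ker (Matrix.mulVecLin (U i) - lam i • LinearMap.id)) =
      2 ^ (N - k) := by
  classical
  -- basic facts
  have hPauli : ∀ i, IsPauli (U i) := fun i => hind.1.1 (U i) ⟨i, rfl⟩
  have hUU : ∀ i, U i * U i = 1 := fun i => isPauli_sq (hPauli i)
  have hcommU : ∀ i j, U i * U j = U j * U i := fun i j =>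
    hind.1.2.1 (U i) ⟨i, rfl⟩ (U j) ⟨j, rfl⟩
  have hlam2 : ∀ i, lam i * lam i = 1 := fun i => by
    rcases hlam i with h | h <;> rw [h] <;> norm_num
  -- the projections
  set E : Fin k → QMat N := fun i => (2⁻¹ : ℂ) • (1 + lam i • U i) with hE
  have hEi : ∀ i, E i = (2⁻¹ : ℂ) • (1 + lam i • U i) := fun i => rfl
  have hA : ∀ i, (1 + lam i • U i) * (1 + lam i • U i) = (2 : ℂ) • (1 + lam i • U i) := by
    intro i
    simp only [mul_add, add_mul, one_mul, mul_one, Matrix.smul_mul, Matrix.mul_smul,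
      smul_smul, hlam2 i, hUU i]
    module
  have hE_idem : ∀ i, E i * E i = E i := by
    intro i
    rw [hEi i, Matrix.smul_mul, Matrix.mul_smul, smul_smul, hA i, smul_smul]
    norm_num
  have hcommE : ∀ i j, E i * E j = E j * E i := by
    intro i j
    simp only [hEi, Matrix.smul_mul, Matrix.mul_smul, mul_add, add_mul, one_mul, mul_one,
      smul_smul, smul_add]
    rw [hcommU i j]
    module
  set EP : List (Fin k) → QMat N := fun l => (l.map E).prod with hEPdef
  have hEP_nil : EP [] = 1 := rfl
  have hEP_cons : ∀ a l, EP (a :: l) = E a * EP l := fun a l => by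
    simp [hEPdef]
  have hcomm_EP : ∀ (a : Fin k) (l : List (Fin k)), E a * EP l = EP l * E a := by
    intro a l
    induction l with
    | nil => simp [hEP_nil]
    | cons b l ih =>
      rw [hEP_cons, ← mul_assoc, hcommE a b, mul_assoc, ih, mul_assoc]
  have hEP_idem : ∀ l : List (Fin k), EP l * EP l = EP l := by
    intro l
    induction l with
    | nil => simp [hEP_nil]
    | cons a l ih =>
      rw [hEP_cons, mul_assoc, ← mul_assoc (EP l), ← hcomm_EP, ← mul_assoc, ← mul_assoc,
        hE_idem, mul_assoc, ih]
  have hmemEP : ∀ (a : Fin k) (l : List (Fin k)), a ∈ l → E a * EP l = EP l := by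
    intro a l
    induction l with
    | nil => intro h; simp at h
    | cons b l ih =>
      intro h
      rcases List.mem_cons.mp h with rfl | h
      · rw [hEP_cons, ← mul_assoc, hE_idem]
      · rw [hEP_cons, ← mul_assoc, hcommE a b, mul_assoc, ih h]
  set WP : List (Fin k) → QMat N := fun t => (t.map U).prod with hWPdef
  have hWP_PP : ∀ t : List (Fin k), IsPP (WP t) := by
    intro t
    induction t with
    | nil => exact one_isPP
    | cons a t ih =>
      have : WP (a :: t) = U a * WP t := by simp [hWPdef]
      rw [this]
      exact isPP_mul (isPauli_isPP (hPauli a)) ih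
  have hWtrace : ∀ t : List (Fin k), t ≠ [] → t.Nodup → Matrix.trace (WP t) = 0 := by
    intro t hne hnd
    refine isPP_trace_eq_zero (hWP_PP t) fun c => ?_
    refine hind.2 (t.map U) (by simpa using hne) (hnd.map hinj) (by simp) c
  have key : ∀ l : List (Fin k), l.Nodup →
      ∀ t : List (Fin k), t.Nodup → (∀ i ∈ t, i ∉ l) →
      Matrix.trace (WP t * EP l) =
        if t = [] then (2 : ℂ) ^ N / 2 ^ l.length else 0 := by
    intro l
    induction l with
    | nil =>
      intro _ t ht _
      rw [hEP_nil, mul_one]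
      by_cases h : t = []
      · subst h
        rw [if_pos rfl]
        show Matrix.trace (1 : QMat N) = _
        rw [Matrix.trace_one]
        simp [Fintype.card_fun]
      · rw [if_neg h]; exact hWtrace t h ht
    | cons a l ih =>
      intro hnd t ht hdis
      have hal : a ∉ l := (List.nodup_cons.mp hnd).1
      have hl : l.Nodup := (List.nodup_cons.mp hnd).2
      have hat : a ∉ t := fun h => hdis a h List.mem_cons_self
      have hWapp : WP (t ++ [a]) = WP t * U a := by simp [hWPdef]
      have hexp : WP t * EP (a :: l) =
          (2⁻¹ : ℂ) • (WP t * EP l) + (2⁻¹ * lam a) • (WP (t ++ [a]) * EP l) := by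
        rw [hWapp, hEP_cons, hEi a]
        simp only [Matrix.smul_mul, Matrix.mul_smul, add_mul, mul_add, smul_add, smul_smul,
          one_mul, mul_assoc]
      rw [hexp, Matrix.trace_add, Matrix.trace_smul, Matrix.trace_smul]
      have hd1 : ∀ i ∈ t, i ∉ l := fun i hi h' => hdis i hi (List.mem_cons_of_mem a h')
      have hnd2 : (t ++ [a]).Nodup := by
        rw [List.nodup_append]
        exact ⟨ht, List.nodup_singleton a, fun x hx y hy hxy => hat (by rw [List.mem_singleton] at hy; subst hy; subst hxy; exact hx)⟩
      have hd2 : ∀ i ∈ t ++ [a], i ∉ l := by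
        intro i hi
        rcases List.mem_append.mp hi with h | h
        · exact hd1 i h
        · simp at h; subst h; exact hal
      have h1 := ih hl t ht hd1
      have h2 := ih hl (t ++ [a]) hnd2 hd2
      rw [if_neg (by simp : ¬(t ++ [a] = []))] at h2
      rw [h1, h2, smul_zero, add_zero]
      by_cases h : t = []
      · subst h
        rw [if_pos rfl, if_pos rfl, List.length_cons, pow_succ, smul_eq_mul]
        field_simp
      · rw [if_neg h, if_neg h, smul_zero]
  -- the projector
  set Pm : QMat N := EP (List.finRange k) with hPmdef
  have hPmtrace : Matrix.trace Pm = (2 : ℂ) ^ N / 2 ^ k := by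
    have h := key (List.finRange k) (List.nodup_finRange k) [] List.nodup_nil (by simp)
    rw [if_pos rfl, List.length_finRange] at h
    have hW : WP [] = 1 := rfl
    rw [hW, one_mul] at h
    exact h
  have hPm_idem : Pm * Pm = Pm := hEP_idem _
  -- fixed point characterizations
  have hfixE : ∀ (i : Fin k) (ψ : (Fin N → Fin 2) → ℂ),
      (U i).mulVec ψ = lam i • ψ ↔ (E i).mulVec ψ = ψ := by
    intro i ψ
    have hexp : (E i).mulVec ψ = (2⁻¹ : ℂ) • (ψ + lam i • (U i).mulVec ψ) := by
      rw [hEi i, Matrix.smul_mulVec, Matrix.add_mulVec, Matrix.one_mulVec,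
        Matrix.smul_mulVec]
    constructor
    · intro h
      rw [hexp, h, smul_smul, hlam2 i, one_smul, ← two_smul ℂ, smul_smul]
      norm_num
    · intro h
      rw [hexp] at h
      have h' : ψ + lam i • (U i).mulVec ψ = (2 : ℂ) • ψ := by
        calc ψ + lam i • (U i).mulVec ψ
            = (2 : ℂ) • ((2⁻¹ : ℂ) • (ψ + lam i • (U i).mulVec ψ)) := by
              rw [smul_smul]; norm_num
          _ = (2 : ℂ) • ψ := by rw [h]
      rw [two_smul] at h'
      have h'' : lam i • (U i).mulVec ψ = ψ := add_left_cancel h'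
      conv_rhs => rw [← h'']
      rw [smul_smul, hlam2 i, one_smul]
  have hfixEP : ∀ (l : List (Fin k)) (ψ : (Fin N → Fin 2) → ℂ),
      (∀ i, (E i).mulVec ψ = ψ) → (EP l).mulVec ψ = ψ := by
    intro l ψ hψ
    induction l with
    | nil => rw [hEP_nil, Matrix.one_mulVec]
    | cons a l ih => rw [hEP_cons, ← Matrix.mulVec_mulVec, ih, hψ a]
  -- the eigenspace is the range of the projector
  have hrange : (⨅ i : Fin k,
      LinearMap.ker (Matrix.mulVecLin (U i) - lam i • LinearMap.id)) =
      LinearMap.range (Matrix.mulVecLin Pm) := by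
    ext ψ
    simp only [Submodule.mem_iInf, LinearMap.mem_ker, LinearMap.sub_apply,
      Matrix.mulVecLin_apply, LinearMap.smul_apply, LinearMap.id_apply, sub_eq_zero,
      LinearMap.mem_range]
    constructor
    · intro h
      exact ⟨ψ, hfixEP (List.finRange k) ψ (fun i => (hfixE i ψ).mp (h i))⟩
    · rintro ⟨φ, rfl⟩
      intro i
      have hEfix : (E i).mulVec (Pm.mulVec φ) = Pm.mulVec φ := by
        rw [Matrix.mulVec_mulVec, hmemEP i _ (List.mem_finRange i)]
      exact (hfixE i _).mpr hEfix
  have hproj : LinearMap.IsProj (LinearMap.range (Matrix.mulVecLin Pm))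
      (Matrix.mulVecLin Pm) := by
    refine ⟨fun x => LinearMap.mem_range_self _ x, ?_⟩
    rintro x ⟨y, rfl⟩
    show Matrix.mulVecLin Pm (Matrix.mulVecLin Pm y) = _
    simp only [Matrix.mulVecLin_apply]
    rw [Matrix.mulVec_mulVec, hPm_idem]
  have htr := hproj.trace
  have htrace_lin : LinearMap.trace ℂ _ (Matrix.mulVecLin Pm) = Matrix.trace Pm := by
    rw [LinearMap.trace_eq_matrix_trace ℂ (Pi.basisFun ℂ (Fin N → Fin 2)),
      LinearMap.toMatrix_eq_toMatrix', ← Matrix.toLin'_apply', LinearMap.toMatrix'_toLin']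
  have hfr : ((Module.finrank ℂ
      ↥(LinearMap.range (Matrix.mulVecLin Pm)) : ℕ) : ℂ) = (2 : ℂ) ^ N / 2 ^ k := by
    rw [← htr, htrace_lin, hPmtrace]
  rw [hrange]
  set d := Module.finrank ℂ ↥(LinearMap.range (Matrix.mulVecLin Pm)) with hd
  have hnat : d * 2 ^ k = 2 ^ N := by
    have hc : ((d * 2 ^ k : ℕ) : ℂ) = ((2 ^ N : ℕ) : ℂ) := by
      push_cast
      rw [hfr]
      field_simp
    exact_mod_cast hc
  have hd0 : d ≠ 0 := by
    intro h0
    rw [h0, zero_mul] at hnat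
    exact (pow_ne_zero N (two_ne_zero)) hnat.symm
  have hk : k ≤ N := by
    have hdvd : (2 : ℕ) ^ k ∣ 2 ^ N := Dvd.intro d (by rw [mul_comm]; exact hnat)
    exact (Nat.pow_dvd_pow_iff_le_right (by norm_num)).mp hdvd
  have : (2 : ℕ) ^ (N - k) * 2 ^ k = 2 ^ N := by
    rw [← pow_add, Nat.sub_add_cancel hk]
  exact Nat.eq_of_mul_eq_mul_right (pow_pos (by norm_num) k) (hnat.trans this.symm)
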